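/- In the three-qubit space EuclideanSpace ℂ (Fin 3 → Fin 2) there exist three pairwise orthogonal subspaces G₁, G₂, G₃ with finrank G₁ = 2, finrank G₂ = 3, finrank G₃ = 3, such that every nonzero vector of each Gᵢ is genuinely multipartite entangled and G₁ ⊔ G₂ ⊔ G₃ = ⊤; i.e., the three-qubit Hilbert space decomposes into three mutually orthogonal genuinely entangled subspaces of dimensions 2, 3 and 3. -/

import Mathlib

/-- `ψ` is biseparable across the bipartition `(S, Sᶜ)` of the three qubits. -/
def Biseparable (S : Set (Fin 3))
    (ψ : EuclideanSpace ℂ (Fin 3 → Fin 2)) : Prop :=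
  ∃ (φ : ((j : S) → Fin 2) → ℂ) (χ : ((j : ↥Sᶜ) → Fin 2) → ℂ),
    ∀ i, ψ i = φ (fun j => i j.val) * χ (fun j => i j.val)

/-- A nonzero vector is genuinely multipartite entangled if it is not biseparable
across any nontrivial bipartition. -/
def GME (ψ : EuclideanSpace ℂ (Fin 3 → Fin 2)) : Prop :=
  ψ ≠ 0 ∧ ∀ S : Set (Fin 3), S ≠ ∅ → S ≠ Set.univ → ¬ Biseparable S ψ

open scoped ComplexConjugate

namespace ThreeQubitGES

lemma bisep_mix {S : Set (Fin 3)} {ψ : EuclideanSpace ℂ (Fin 3 → Fin 2)}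
    (h : Biseparable S ψ) {i i' m m' : Fin 3 → Fin 2}
    (hm1 : ∀ k ∈ S, m k = i k) (hm2 : ∀ k ∉ S, m k = i' k)
    (hm3 : ∀ k ∈ S, m' k = i' k) (hm4 : ∀ k ∉ S, m' k = i k) :
    ψ i * ψ i' = ψ m * ψ m' := by
  obtain ⟨φ, χ, hφ⟩ := h
  rw [hφ, hφ, hφ, hφ]
  have h1 : (fun j : S => m j.val) = fun j : S => i j.val := by
    funext j; exact hm1 j.val j.property
  have h2 : (fun j : S => m' j.val) = fun j : S => i' j.val := by
    funext j; exact hm3 j.val j.property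
  have h3 : (fun j : ↥Sᶜ => m j.val) = fun j : ↥Sᶜ => i' j.val := by
    funext j; exact hm2 j.val j.property
  have h4 : (fun j : ↥Sᶜ => m' j.val) = fun j : ↥Sᶜ => i j.val := by
    funext j; exact hm4 j.val j.property
  rw [h1, h2, h3, h4]
  ring

lemma cutA {S : Set (Fin 3)} {ψ : EuclideanSpace ℂ (Fin 3 → Fin 2)}
    (h : Biseparable S ψ) (hS : S = {0} ∨ S = {1, 2}) (b c b' c' : Fin 2) :
    ψ ![0,b,c] * ψ ![1,b',c'] = ψ ![0,b',c'] * ψ ![1,b,c] := by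
  rcases hS with rfl | rfl
  · exact bisep_mix h (m := ![0,b',c']) (m' := ![1,b,c])
      (by intro k hk; fin_cases k <;> simp_all)
      (by intro k hk; fin_cases k <;> simp_all)
      (by intro k hk; fin_cases k <;> simp_all)
      (by intro k hk; fin_cases k <;> simp_all)
  · rw [mul_comm (ψ ![0,b',c'])]
    exact bisep_mix h (m := ![1,b,c]) (m' := ![0,b',c'])
      (by intro k hk; fin_cases k <;> simp_all)
      (by intro k hk; fin_cases k <;> simp_all)
      (by intro k hk; fin_cases k <;> simp_all)
      (by intro k hk; fin_cases k <;> simp_all)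

lemma cutB {S : Set (Fin 3)} {ψ : EuclideanSpace ℂ (Fin 3 → Fin 2)}
    (h : Biseparable S ψ) (hS : S = {1} ∨ S = {0, 2}) (a c a' c' : Fin 2) :
    ψ ![a,0,c] * ψ ![a',1,c'] = ψ ![a',0,c'] * ψ ![a,1,c] := by
  rcases hS with rfl | rfl
  · exact bisep_mix h (m := ![a',0,c']) (m' := ![a,1,c])
      (by intro k hk; fin_cases k <;> simp_all)
      (by intro k hk; fin_cases k <;> simp_all)
      (by intro k hk; fin_cases k <;> simp_all)
      (by intro k hk; fin_cases k <;> simp_all)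
  · rw [mul_comm (ψ ![a',0,c'])]
    exact bisep_mix h (m := ![a,1,c]) (m' := ![a',0,c'])
      (by intro k hk; fin_cases k <;> simp_all)
      (by intro k hk; fin_cases k <;> simp_all)
      (by intro k hk; fin_cases k <;> simp_all)
      (by intro k hk; fin_cases k <;> simp_all)

lemma cutC {S : Set (Fin 3)} {ψ : EuclideanSpace ℂ (Fin 3 → Fin 2)}
    (h : Biseparable S ψ) (hS : S = {2} ∨ S = {0, 1}) (a b a' b' : Fin 2) :
    ψ ![a,b,0] * ψ ![a',b',1] = ψ ![a',b',0] * ψ ![a,b,1] := by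
  rcases hS with rfl | rfl
  · exact bisep_mix h (m := ![a',b',0]) (m' := ![a,b,1])
      (by intro k hk; fin_cases k <;> simp_all)
      (by intro k hk; fin_cases k <;> simp_all)
      (by intro k hk; fin_cases k <;> simp_all)
      (by intro k hk; fin_cases k <;> simp_all)
  · rw [mul_comm (ψ ![a',b',0])]
    exact bisep_mix h (m := ![a,b,1]) (m' := ![a',b',0])
      (by intro k hk; fin_cases k <;> simp_all)
      (by intro k hk; fin_cases k <;> simp_all)
      (by intro k hk; fin_cases k <;> simp_all)
      (by intro k hk; fin_cases k <;> simp_all)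

lemma classify (S : Set (Fin 3)) (h1 : S ≠ ∅) (h2 : S ≠ Set.univ) :
    (S = {0} ∨ S = {1, 2}) ∨ (S = {1} ∨ S = {0, 2}) ∨ (S = {2} ∨ S = {0, 1}) := by
  by_cases m0 : (0 : Fin 3) ∈ S <;> by_cases m1 : (1 : Fin 3) ∈ S <;>
    by_cases m2 : (2 : Fin 3) ∈ S
  · exact absurd (Set.eq_univ_of_forall fun x => by fin_cases x <;> assumption) h2
  · exact Or.inr (Or.inr (Or.inr (Set.ext fun x => by fin_cases x <;> simp [m0, m1, m2])))
  · exact Or.inr (Or.inl (Or.inr (Set.ext fun x => by fin_cases x <;> simp [m0, m1, m2])))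
  · exact Or.inl (Or.inl (Set.ext fun x => by fin_cases x <;> simp [m0, m1, m2]))
  · exact Or.inl (Or.inr (Set.ext fun x => by fin_cases x <;> simp [m0, m1, m2]))
  · exact Or.inr (Or.inl (Or.inl (Set.ext fun x => by fin_cases x <;> simp [m0, m1, m2])))
  · exact Or.inr (Or.inr (Or.inl (Set.ext fun x => by fin_cases x <;> simp [m0, m1, m2])))
  · exact absurd (Set.eq_empty_iff_forall_notMem.mpr fun x => by
      fin_cases x <;> assumption) h1

def bij8 : Fin 8 → (Fin 3 → Fin 2) :=
  ![![0,0,0], ![0,0,1], ![0,1,0], ![0,1,1], ![1,0,0], ![1,0,1], ![1,1,0], ![1,1,1]]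

lemma sum_expand (f : (Fin 3 → Fin 2) → ℂ) :
    ∑ i, f i = f ![0,0,0] + f ![0,0,1] + f ![0,1,0] + f ![0,1,1]
      + f ![1,0,0] + f ![1,0,1] + f ![1,1,0] + f ![1,1,1] := by
  rw [← Fintype.sum_bijective bij8 (by decide) (fun k => f (bij8 k)) f (fun k => rfl)]
  simp [Fin.sum_univ_succ, bij8]
  ring

lemma inner_expand (x y : EuclideanSpace ℂ (Fin 3 → Fin 2)) :
    inner ℂ x y = conj (x ![0,0,0]) * y ![0,0,0] + conj (x ![0,0,1]) * y ![0,0,1]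
      + conj (x ![0,1,0]) * y ![0,1,0] + conj (x ![0,1,1]) * y ![0,1,1]
      + conj (x ![1,0,0]) * y ![1,0,0] + conj (x ![1,0,1]) * y ![1,0,1]
      + conj (x ![1,1,0]) * y ![1,1,0] + conj (x ![1,1,1]) * y ![1,1,1] := by
  rw [PiLp.inner_apply, sum_expand]
  simp [RCLike.inner_apply, mul_comm]

noncomputable def w1 : EuclideanSpace ℂ (Fin 3 → Fin 2) :=
  WithLp.toLp 2 fun (i : Fin 3 → Fin 2) => ![![![-1, -1], ![-1, 1]], ![![0, 1], ![0, 1]]] (i 0) (i 1) (i 2)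

noncomputable def w2 : EuclideanSpace ℂ (Fin 3 → Fin 2) :=
  WithLp.toLp 2 fun (i : Fin 3 → Fin 2) => ![![![0, -1], ![-1, 0]], ![![1, -1], ![1, -1]]] (i 0) (i 1) (i 2)

noncomputable def w3 : EuclideanSpace ℂ (Fin 3 → Fin 2) :=
  WithLp.toLp 2 fun (i : Fin 3 → Fin 2) => ![![![-1, 1], ![-1, -1]], ![![1, 0], ![-1, 0]]] (i 0) (i 1) (i 2)

noncomputable def w4 : EuclideanSpace ℂ (Fin 3 → Fin 2) :=
  WithLp.toLp 2 fun (i : Fin 3 → Fin 2) => ![![![-1, 0], ![0, 1]], ![![-1, -1], ![-1, -1]]] (i 0) (i 1) (i 2)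

noncomputable def w5 : EuclideanSpace ℂ (Fin 3 → Fin 2) :=
  WithLp.toLp 2 fun (i : Fin 3 → Fin 2) => ![![![0, -1], ![1, 0]], ![![1, -1], ![-1, 1]]] (i 0) (i 1) (i 2)

noncomputable def w6 : EuclideanSpace ℂ (Fin 3 → Fin 2) :=
  WithLp.toLp 2 fun (i : Fin 3 → Fin 2) => ![![![-1, -1], ![1, -1]], ![![0, 1], ![0, -1]]] (i 0) (i 1) (i 2)

noncomputable def w7 : EuclideanSpace ℂ (Fin 3 → Fin 2) :=
  WithLp.toLp 2 fun (i : Fin 3 → Fin 2) => ![![![-1, 1], ![1, 1]], ![![1, 0], ![1, 0]]] (i 0) (i 1) (i 2)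

noncomputable def w8 : EuclideanSpace ℂ (Fin 3 → Fin 2) :=
  WithLp.toLp 2 fun (i : Fin 3 → Fin 2) => ![![![1, 0], ![0, 1]], ![![1, 1], ![-1, -1]]] (i 0) (i 1) (i 2)

@[simp] lemma w1_eval_000 : w1 ![0,0,0] = -1 := by
  simp [w1, Matrix.cons_val_two]

@[simp] lemma w1_eval_001 : w1 ![0,0,1] = -1 := by
  simp [w1, Matrix.cons_val_two]

@[simp] lemma w1_eval_010 : w1 ![0,1,0] = -1 := by
  simp [w1, Matrix.cons_val_two]

@[simp] lemma w1_eval_011 : w1 ![0,1,1] = 1 := by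
  simp [w1, Matrix.cons_val_two]

@[simp] lemma w1_eval_100 : w1 ![1,0,0] = 0 := by
  simp [w1, Matrix.cons_val_two]

@[simp] lemma w1_eval_101 : w1 ![1,0,1] = 1 := by
  simp [w1, Matrix.cons_val_two]

@[simp] lemma w1_eval_110 : w1 ![1,1,0] = 0 := by
  simp [w1, Matrix.cons_val_two]

@[simp] lemma w1_eval_111 : w1 ![1,1,1] = 1 := by
  simp [w1, Matrix.cons_val_two]

@[simp] lemma w2_eval_000 : w2 ![0,0,0] = 0 := by
  simp [w2, Matrix.cons_val_two]

@[simp] lemma w2_eval_001 : w2 ![0,0,1] = -1 := by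
  simp [w2, Matrix.cons_val_two]

@[simp] lemma w2_eval_010 : w2 ![0,1,0] = -1 := by
  simp [w2, Matrix.cons_val_two]

@[simp] lemma w2_eval_011 : w2 ![0,1,1] = 0 := by
  simp [w2, Matrix.cons_val_two]

@[simp] lemma w2_eval_100 : w2 ![1,0,0] = 1 := by
  simp [w2, Matrix.cons_val_two]

@[simp] lemma w2_eval_101 : w2 ![1,0,1] = -1 := by
  simp [w2, Matrix.cons_val_two]

@[simp] lemma w2_eval_110 : w2 ![1,1,0] = 1 := by
  simp [w2, Matrix.cons_val_two]

@[simp] lemma w2_eval_111 : w2 ![1,1,1] = -1 := by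
  simp [w2, Matrix.cons_val_two]

@[simp] lemma w3_eval_000 : w3 ![0,0,0] = -1 := by
  simp [w3, Matrix.cons_val_two]

@[simp] lemma w3_eval_001 : w3 ![0,0,1] = 1 := by
  simp [w3, Matrix.cons_val_two]

@[simp] lemma w3_eval_010 : w3 ![0,1,0] = -1 := by
  simp [w3, Matrix.cons_val_two]

@[simp] lemma w3_eval_011 : w3 ![0,1,1] = -1 := by
  simp [w3, Matrix.cons_val_two]

@[simp] lemma w3_eval_100 : w3 ![1,0,0] = 1 := by
  simp [w3, Matrix.cons_val_two]

@[simp] lemma w3_eval_101 : w3 ![1,0,1] = 0 := by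
  simp [w3, Matrix.cons_val_two]

@[simp] lemma w3_eval_110 : w3 ![1,1,0] = -1 := by
  simp [w3, Matrix.cons_val_two]

@[simp] lemma w3_eval_111 : w3 ![1,1,1] = 0 := by
  simp [w3, Matrix.cons_val_two]

@[simp] lemma w4_eval_000 : w4 ![0,0,0] = -1 := by
  simp [w4, Matrix.cons_val_two]

@[simp] lemma w4_eval_001 : w4 ![0,0,1] = 0 := by
  simp [w4, Matrix.cons_val_two]

@[simp] lemma w4_eval_010 : w4 ![0,1,0] = 0 := by
  simp [w4, Matrix.cons_val_two]

@[simp] lemma w4_eval_011 : w4 ![0,1,1] = 1 := by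
  simp [w4, Matrix.cons_val_two]

@[simp] lemma w4_eval_100 : w4 ![1,0,0] = -1 := by
  simp [w4, Matrix.cons_val_two]

@[simp] lemma w4_eval_101 : w4 ![1,0,1] = -1 := by
  simp [w4, Matrix.cons_val_two]

@[simp] lemma w4_eval_110 : w4 ![1,1,0] = -1 := by
  simp [w4, Matrix.cons_val_two]

@[simp] lemma w4_eval_111 : w4 ![1,1,1] = -1 := by
  simp [w4, Matrix.cons_val_two]

@[simp] lemma w5_eval_000 : w5 ![0,0,0] = 0 := by
  simp [w5, Matrix.cons_val_two]

@[simp] lemma w5_eval_001 : w5 ![0,0,1] = -1 := by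
  simp [w5, Matrix.cons_val_two]

@[simp] lemma w5_eval_010 : w5 ![0,1,0] = 1 := by
  simp [w5, Matrix.cons_val_two]

@[simp] lemma w5_eval_011 : w5 ![0,1,1] = 0 := by
  simp [w5, Matrix.cons_val_two]

@[simp] lemma w5_eval_100 : w5 ![1,0,0] = 1 := by
  simp [w5, Matrix.cons_val_two]

@[simp] lemma w5_eval_101 : w5 ![1,0,1] = -1 := by
  simp [w5, Matrix.cons_val_two]

@[simp] lemma w5_eval_110 : w5 ![1,1,0] = -1 := by
  simp [w5, Matrix.cons_val_two]

@[simp] lemma w5_eval_111 : w5 ![1,1,1] = 1 := by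
  simp [w5, Matrix.cons_val_two]

@[simp] lemma w6_eval_000 : w6 ![0,0,0] = -1 := by
  simp [w6, Matrix.cons_val_two]

@[simp] lemma w6_eval_001 : w6 ![0,0,1] = -1 := by
  simp [w6, Matrix.cons_val_two]

@[simp] lemma w6_eval_010 : w6 ![0,1,0] = 1 := by
  simp [w6, Matrix.cons_val_two]

@[simp] lemma w6_eval_011 : w6 ![0,1,1] = -1 := by
  simp [w6, Matrix.cons_val_two]

@[simp] lemma w6_eval_100 : w6 ![1,0,0] = 0 := by
  simp [w6, Matrix.cons_val_two]

@[simp] lemma w6_eval_101 : w6 ![1,0,1] = 1 := by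
  simp [w6, Matrix.cons_val_two]

@[simp] lemma w6_eval_110 : w6 ![1,1,0] = 0 := by
  simp [w6, Matrix.cons_val_two]

@[simp] lemma w6_eval_111 : w6 ![1,1,1] = -1 := by
  simp [w6, Matrix.cons_val_two]

@[simp] lemma w7_eval_000 : w7 ![0,0,0] = -1 := by
  simp [w7, Matrix.cons_val_two]

@[simp] lemma w7_eval_001 : w7 ![0,0,1] = 1 := by
  simp [w7, Matrix.cons_val_two]

@[simp] lemma w7_eval_010 : w7 ![0,1,0] = 1 := by
  simp [w7, Matrix.cons_val_two]

@[simp] lemma w7_eval_011 : w7 ![0,1,1] = 1 := by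
  simp [w7, Matrix.cons_val_two]

@[simp] lemma w7_eval_100 : w7 ![1,0,0] = 1 := by
  simp [w7, Matrix.cons_val_two]

@[simp] lemma w7_eval_101 : w7 ![1,0,1] = 0 := by
  simp [w7, Matrix.cons_val_two]

@[simp] lemma w7_eval_110 : w7 ![1,1,0] = 1 := by
  simp [w7, Matrix.cons_val_two]

@[simp] lemma w7_eval_111 : w7 ![1,1,1] = 0 := by
  simp [w7, Matrix.cons_val_two]

@[simp] lemma w8_eval_000 : w8 ![0,0,0] = 1 := by
  simp [w8, Matrix.cons_val_two]

@[simp] lemma w8_eval_001 : w8 ![0,0,1] = 0 := by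
  simp [w8, Matrix.cons_val_two]

@[simp] lemma w8_eval_010 : w8 ![0,1,0] = 0 := by
  simp [w8, Matrix.cons_val_two]

@[simp] lemma w8_eval_011 : w8 ![0,1,1] = 1 := by
  simp [w8, Matrix.cons_val_two]

@[simp] lemma w8_eval_100 : w8 ![1,0,0] = 1 := by
  simp [w8, Matrix.cons_val_two]

@[simp] lemma w8_eval_101 : w8 ![1,0,1] = 1 := by
  simp [w8, Matrix.cons_val_two]

@[simp] lemma w8_eval_110 : w8 ![1,1,0] = -1 := by
  simp [w8, Matrix.cons_val_two]

@[simp] lemma w8_eval_111 : w8 ![1,1,1] = -1 := by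
  simp [w8, Matrix.cons_val_two]

lemma gme1 : ∀ ψ ∈ Submodule.span ℂ ({w1, w2} : Set (EuclideanSpace ℂ (Fin 3 → Fin 2))), ψ ≠ 0 → GME ψ := by
  intro ψ hmem hne
  refine ⟨hne, fun S hSne hSuniv hB => ?_⟩
  obtain ⟨s, t, hst⟩ := Submodule.mem_span_pair.mp hmem
  have hco : ∀ i, ψ i = s * w1 i + t * w2 i := fun i => by rw [← hst]; rfl
  have c000 : ψ ![0,0,0] = s * (-1) + t * (0) := by rw [hco]; norm_num
  have c001 : ψ ![0,0,1] = s * (-1) + t * (-1) := by rw [hco]; norm_num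
  have c010 : ψ ![0,1,0] = s * (-1) + t * (-1) := by rw [hco]; norm_num
  have c011 : ψ ![0,1,1] = s * (1) + t * (0) := by rw [hco]; norm_num
  have c100 : ψ ![1,0,0] = s * (0) + t * (1) := by rw [hco]; norm_num
  have c101 : ψ ![1,0,1] = s * (1) + t * (-1) := by rw [hco]; norm_num
  have c110 : ψ ![1,1,0] = s * (0) + t * (1) := by rw [hco]; norm_num
  have c111 : ψ ![1,1,1] = s * (1) + t * (-1) := by rw [hco]; norm_num
  have hker : s = 0 ∧ t = 0 := by
    rcases classify S hSne hSuniv with hS | hS | hS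
    · have e1 := cutA hB hS 0 0 1 0
      have e2 := cutA hB hS 0 0 1 1
      simp only [c000, c010, c011, c100, c110, c111] at e1 e2
      have hs : s * s = 0 := by linear_combination (-1 : ℂ) * e2
      have ht : t * t = 0 := by linear_combination (1 : ℂ) * e1
      exact ⟨mul_self_eq_zero.mp hs, mul_self_eq_zero.mp ht⟩
    · have e0 := cutB hB hS 0 0 0 1
      have e1 := cutB hB hS 0 0 1 0
      have e2 := cutB hB hS 0 0 1 1
      simp only [c000, c001, c010, c011, c100, c101, c110, c111] at e0 e1 e2
      have hs : s * s = 0 := by linear_combination ((-1 : ℂ)/2) * e0 + ((-3 : ℂ)/2) * e1 + (-1 : ℂ) * e2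
      have ht : t * t = 0 := by linear_combination (1 : ℂ) * e1
      exact ⟨mul_self_eq_zero.mp hs, mul_self_eq_zero.mp ht⟩
    · have e0 := cutC hB hS 0 0 0 1
      have e1 := cutC hB hS 0 0 1 0
      have e3 := cutC hB hS 0 1 1 0
      simp only [c000, c001, c010, c011, c100, c101] at e0 e1 e3
      have hs : s * s = 0 := by linear_combination ((-1 : ℂ)/3) * e0 + ((-1 : ℂ)/3) * e1
      have ht : t * t = 0 := by linear_combination ((-1 : ℂ)/3) * e0 + ((2 : ℂ)/3) * e3
      exact ⟨mul_self_eq_zero.mp hs, mul_self_eq_zero.mp ht⟩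
  obtain ⟨rfl, rfl⟩ := hker
  exact hne (by rw [← hst]; simp)

lemma gme2 : ∀ ψ ∈ Submodule.span ℂ ({w3, w4, w5} : Set (EuclideanSpace ℂ (Fin 3 → Fin 2))), ψ ≠ 0 → GME ψ := by
  intro ψ hmem hne
  refine ⟨hne, fun S hSne hSuniv hB => ?_⟩
  rw [Submodule.mem_span_insert] at hmem
  obtain ⟨s, z, hz, hsz⟩ := hmem
  obtain ⟨t, u, htu⟩ := Submodule.mem_span_pair.mp hz
  have hco : ∀ i, ψ i = s * w3 i + (t * w4 i + u * w5 i) := fun i => by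
    rw [hsz, ← htu]; rfl
  have c000 : ψ ![0,0,0] = s * (-1) + (t * (-1) + u * (0)) := by rw [hco]; norm_num
  have c001 : ψ ![0,0,1] = s * (1) + (t * (0) + u * (-1)) := by rw [hco]; norm_num
  have c010 : ψ ![0,1,0] = s * (-1) + (t * (0) + u * (1)) := by rw [hco]; norm_num
  have c011 : ψ ![0,1,1] = s * (-1) + (t * (1) + u * (0)) := by rw [hco]; norm_num
  have c100 : ψ ![1,0,0] = s * (1) + (t * (-1) + u * (1)) := by rw [hco]; norm_num
  have c101 : ψ ![1,0,1] = s * (0) + (t * (-1) + u * (-1)) := by rw [hco]; norm_num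
  have c110 : ψ ![1,1,0] = s * (-1) + (t * (-1) + u * (-1)) := by rw [hco]; norm_num
  have c111 : ψ ![1,1,1] = s * (0) + (t * (-1) + u * (1)) := by rw [hco]; norm_num
  have hker : s = 0 ∧ t = 0 ∧ u = 0 := by
    rcases classify S hSne hSuniv with hS | hS | hS
    · have e0 := cutA hB hS 0 0 0 1
      have e1 := cutA hB hS 0 0 1 0
      have e2 := cutA hB hS 0 0 1 1
      have e3 := cutA hB hS 0 1 1 0
      have e4 := cutA hB hS 0 1 1 1
      have e5 := cutA hB hS 1 0 1 1
      simp only [c000, c001, c010, c011, c100, c101, c110, c111] at e0 e1 e2 e3 e4 e5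
      have hs : s * s = 0 := by linear_combination ((-7 : ℂ)/26) * e0 + ((9 : ℂ)/26) * e1 + ((2 : ℂ)/13) * e2 + ((2 : ℂ)/13) * e3 + ((-9 : ℂ)/26) * e4 + ((-1 : ℂ)/26) * e5
      have ht : t * t = 0 := by linear_combination ((5 : ℂ)/26) * e0 + ((1 : ℂ)/26) * e1 + ((11 : ℂ)/52) * e2 + ((-1 : ℂ)/26) * e3 + ((11 : ℂ)/52) * e4 + ((7 : ℂ)/52) * e5
      have hu : u * u = 0 := by linear_combination ((1 : ℂ)/13) * e0 + ((3 : ℂ)/26) * e1 + ((7 : ℂ)/52) * e2 + ((5 : ℂ)/13) * e3 + ((-19 : ℂ)/52) * e4 + ((-5 : ℂ)/52) * e5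
      exact ⟨mul_self_eq_zero.mp hs, mul_self_eq_zero.mp ht, mul_self_eq_zero.mp hu⟩
    · have e0 := cutB hB hS 0 0 0 1
      have e1 := cutB hB hS 0 0 1 0
      have e2 := cutB hB hS 0 0 1 1
      have e3 := cutB hB hS 0 1 1 0
      have e4 := cutB hB hS 0 1 1 1
      have e5 := cutB hB hS 1 0 1 1
      simp only [c000, c001, c010, c011, c100, c101, c110, c111] at e0 e1 e2 e3 e4 e5
      have hs : s * s = 0 := by linear_combination ((2 : ℂ)/9) * e0 + ((5 : ℂ)/18) * e1 + ((-1 : ℂ)/18) * e2 + ((1 : ℂ)/18) * e3 + ((-1 : ℂ)/18) * e4 + ((1 : ℂ)/9) * e5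
      have ht : t * t = 0 := by linear_combination ((-5 : ℂ)/18) * e0 + ((5 : ℂ)/18) * e1 + ((4 : ℂ)/9) * e2 + ((1 : ℂ)/18) * e3 + ((-1 : ℂ)/18) * e4 + ((1 : ℂ)/9) * e5
      have hu : u * u = 0 := by linear_combination ((1 : ℂ)/18) * e0 + ((-1 : ℂ)/18) * e1 + ((1 : ℂ)/9) * e2 + ((7 : ℂ)/18) * e3 + ((-7 : ℂ)/18) * e4 + ((-2 : ℂ)/9) * e5
      exact ⟨mul_self_eq_zero.mp hs, mul_self_eq_zero.mp ht, mul_self_eq_zero.mp hu⟩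
    · have e0 := cutC hB hS 0 0 0 1
      have e1 := cutC hB hS 0 0 1 0
      have e2 := cutC hB hS 0 0 1 1
      have e3 := cutC hB hS 0 1 1 0
      have e4 := cutC hB hS 0 1 1 1
      have e5 := cutC hB hS 1 0 1 1
      simp only [c000, c001, c010, c011, c100, c101, c110, c111] at e0 e1 e2 e3 e4 e5
      have hs : s * s = 0 := by linear_combination ((1 : ℂ)/3) * e0 + ((1 : ℂ)/3) * e3 + ((-1 : ℂ)/6) * e5
      have ht : t * t = 0 := by linear_combination ((-1 : ℂ)/8) * e1 + ((-1 : ℂ)/8) * e2 + ((5 : ℂ)/8) * e3 + ((5 : ℂ)/8) * e4 + ((-1 : ℂ)/4) * e5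
      have hu : u * u = 0 := by linear_combination ((1 : ℂ)/3) * e0 + ((3 : ℂ)/8) * e1 + ((-7 : ℂ)/24) * e2 + ((1 : ℂ)/8) * e3 + ((1 : ℂ)/8) * e4 + ((1 : ℂ)/12) * e5
      exact ⟨mul_self_eq_zero.mp hs, mul_self_eq_zero.mp ht, mul_self_eq_zero.mp hu⟩
  obtain ⟨rfl, rfl, rfl⟩ := hker
  exact hne (by rw [hsz, ← htu]; simp)

lemma gme3 : ∀ ψ ∈ Submodule.span ℂ ({w6, w7, w8} : Set (EuclideanSpace ℂ (Fin 3 → Fin 2))), ψ ≠ 0 → GME ψ := by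
  intro ψ hmem hne
  refine ⟨hne, fun S hSne hSuniv hB => ?_⟩
  rw [Submodule.mem_span_insert] at hmem
  obtain ⟨s, z, hz, hsz⟩ := hmem
  obtain ⟨t, u, htu⟩ := Submodule.mem_span_pair.mp hz
  have hco : ∀ i, ψ i = s * w6 i + (t * w7 i + u * w8 i) := fun i => by
    rw [hsz, ← htu]; rfl
  have c000 : ψ ![0,0,0] = s * (-1) + (t * (-1) + u * (1)) := by rw [hco]; norm_num
  have c001 : ψ ![0,0,1] = s * (-1) + (t * (1) + u * (0)) := by rw [hco]; norm_num
  have c010 : ψ ![0,1,0] = s * (1) + (t * (1) + u * (0)) := by rw [hco]; norm_num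
  have c011 : ψ ![0,1,1] = s * (-1) + (t * (1) + u * (1)) := by rw [hco]; norm_num
  have c100 : ψ ![1,0,0] = s * (0) + (t * (1) + u * (1)) := by rw [hco]; norm_num
  have c101 : ψ ![1,0,1] = s * (1) + (t * (0) + u * (1)) := by rw [hco]; norm_num
  have c110 : ψ ![1,1,0] = s * (0) + (t * (1) + u * (-1)) := by rw [hco]; norm_num
  have c111 : ψ ![1,1,1] = s * (-1) + (t * (0) + u * (-1)) := by rw [hco]; norm_num
  have hker : s = 0 ∧ t = 0 ∧ u = 0 := by
    rcases classify S hSne hSuniv with hS | hS | hS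
    · have e0 := cutA hB hS 0 0 0 1
      have e1 := cutA hB hS 0 0 1 0
      have e2 := cutA hB hS 0 0 1 1
      have e3 := cutA hB hS 0 1 1 0
      have e4 := cutA hB hS 0 1 1 1
      have e5 := cutA hB hS 1 0 1 1
      simp only [c000, c001, c010, c011, c100, c101, c110, c111] at e0 e1 e2 e3 e4 e5
      have hs : s * s = 0 := by linear_combination ((-1 : ℂ)/13) * e0 + ((-7 : ℂ)/52) * e1 + ((-3 : ℂ)/26) * e2 + ((-19 : ℂ)/52) * e3 + ((5 : ℂ)/13) * e4 + ((5 : ℂ)/52) * e5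
      have ht : t * t = 0 := by linear_combination ((-5 : ℂ)/26) * e0 + ((-11 : ℂ)/52) * e1 + ((-1 : ℂ)/26) * e2 + ((11 : ℂ)/52) * e3 + ((-1 : ℂ)/26) * e4 + ((-7 : ℂ)/52) * e5
      have hu : u * u = 0 := by linear_combination ((7 : ℂ)/26) * e0 + ((-2 : ℂ)/13) * e1 + ((-9 : ℂ)/26) * e2 + ((-9 : ℂ)/26) * e3 + ((2 : ℂ)/13) * e4 + ((1 : ℂ)/26) * e5
      exact ⟨mul_self_eq_zero.mp hs, mul_self_eq_zero.mp ht, mul_self_eq_zero.mp hu⟩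
    · have e0 := cutB hB hS 0 0 0 1
      have e1 := cutB hB hS 0 0 1 0
      have e2 := cutB hB hS 0 0 1 1
      have e3 := cutB hB hS 0 1 1 0
      have e4 := cutB hB hS 0 1 1 1
      have e5 := cutB hB hS 1 0 1 1
      simp only [c000, c001, c010, c011, c100, c101, c110, c111] at e0 e1 e2 e3 e4 e5
      have hs : s * s = 0 := by linear_combination ((1 : ℂ)/9) * e0 + ((-1 : ℂ)/9) * e1 + ((-1 : ℂ)/18) * e2 + ((-1 : ℂ)/9) * e3 + ((7 : ℂ)/18) * e4 + ((-5 : ℂ)/18) * e5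
      have ht : t * t = 0 := by linear_combination ((-2 : ℂ)/9) * e0 + ((-5 : ℂ)/18) * e1 + ((1 : ℂ)/9) * e2 + ((-5 : ℂ)/18) * e3 + ((2 : ℂ)/9) * e4 + ((1 : ℂ)/18) * e5
      have hu : u * u = 0 := by linear_combination ((1 : ℂ)/9) * e0 + ((-1 : ℂ)/9) * e1 + ((-5 : ℂ)/9) * e2 + ((-1 : ℂ)/9) * e3 + ((-1 : ℂ)/9) * e4 + ((2 : ℂ)/9) * e5
      exact ⟨mul_self_eq_zero.mp hs, mul_self_eq_zero.mp ht, mul_self_eq_zero.mp hu⟩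
    · have e0 := cutC hB hS 0 0 0 1
      have e1 := cutC hB hS 0 0 1 0
      have e2 := cutC hB hS 0 0 1 1
      have e3 := cutC hB hS 0 1 1 0
      have e4 := cutC hB hS 0 1 1 1
      have e5 := cutC hB hS 1 0 1 1
      simp only [c000, c001, c010, c011, c100, c101, c110, c111] at e0 e1 e2 e3 e4 e5
      have hs : s * s = 0 := by linear_combination ((1 : ℂ)/3) * e0 + ((-1 : ℂ)/2) * e1 + ((-1 : ℂ)/2) * e2 + ((1 : ℂ)/3) * e3 + ((-1 : ℂ)/6) * e5
      have ht : t * t = 0 := by linear_combination (-1 : ℂ) * e1 + (-1 : ℂ) * e2 + ((1 : ℂ)/2) * e3 + ((1 : ℂ)/2) * e4 + ((-1 : ℂ)/2) * e5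
      have hu : u * u = 0 := by linear_combination ((1 : ℂ)/3) * e0 + ((-2 : ℂ)/3) * e2 + ((-2 : ℂ)/3) * e5
      exact ⟨mul_self_eq_zero.mp hs, mul_self_eq_zero.mp ht, mul_self_eq_zero.mp hu⟩
  obtain ⟨rfl, rfl, rfl⟩ := hker
  exact hne (by rw [hsz, ← htu]; simp)

lemma li1 : LinearIndependent ℂ ![w1, w2] := by
  rw [Fintype.linearIndependent_iff]
  intro g hgsum
  rw [Fin.sum_univ_two] at hgsum
  simp only [Matrix.cons_val_zero, Matrix.cons_val_one, Matrix.head_cons, Matrix.cons_val_two, Matrix.tail_cons] at hgsum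
  have q0 : g 0 * (-1) + g 1 * (0) = 0 := by
    have := congrFun (congrArg WithLp.ofLp hgsum) ![0,0,0]
    simpa using this
  have q1 : g 0 * (-1) + g 1 * (-1) = 0 := by
    have := congrFun (congrArg WithLp.ofLp hgsum) ![0,0,1]
    simpa using this
  have hg0 : g 0 = 0 := by linear_combination (-1 : ℂ) * q0
  have hg1 : g 1 = 0 := by linear_combination (1 : ℂ) * q0 + (-1 : ℂ) * q1
  intro i; fin_cases i
  · exact hg0
  · exact hg1

lemma li2 : LinearIndependent ℂ ![w3, w4, w5] := by
  rw [Fintype.linearIndependent_iff]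
  intro g hgsum
  rw [Fin.sum_univ_three] at hgsum
  simp only [Matrix.cons_val_zero, Matrix.cons_val_one, Matrix.head_cons, Matrix.cons_val_two, Matrix.tail_cons] at hgsum
  have q0 : g 0 * (-1) + g 1 * (-1) + g 2 * (0) = 0 := by
    have := congrFun (congrArg WithLp.ofLp hgsum) ![0,0,0]
    simpa using this
  have q1 : g 0 * (1) + g 1 * (0) + g 2 * (-1) = 0 := by
    have := congrFun (congrArg WithLp.ofLp hgsum) ![0,0,1]
    simpa using this
  have q2 : g 0 * (-1) + g 1 * (1) + g 2 * (0) = 0 := by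
    have := congrFun (congrArg WithLp.ofLp hgsum) ![0,1,1]
    simpa using this
  have hg0 : g 0 = 0 := by linear_combination ((-1 : ℂ)/2) * q0 + ((-1 : ℂ)/2) * q2
  have hg1 : g 1 = 0 := by linear_combination ((-1 : ℂ)/2) * q0 + ((1 : ℂ)/2) * q2
  have hg2 : g 2 = 0 := by linear_combination ((-1 : ℂ)/2) * q0 + (-1 : ℂ) * q1 + ((-1 : ℂ)/2) * q2
  intro i; fin_cases i
  · exact hg0
  · exact hg1
  · exact hg2

lemma li3 : LinearIndependent ℂ ![w6, w7, w8] := by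
  rw [Fintype.linearIndependent_iff]
  intro g hgsum
  rw [Fin.sum_univ_three] at hgsum
  simp only [Matrix.cons_val_zero, Matrix.cons_val_one, Matrix.head_cons, Matrix.cons_val_two, Matrix.tail_cons] at hgsum
  have q0 : g 0 * (-1) + g 1 * (-1) + g 2 * (1) = 0 := by
    have := congrFun (congrArg WithLp.ofLp hgsum) ![0,0,0]
    simpa using this
  have q1 : g 0 * (-1) + g 1 * (1) + g 2 * (0) = 0 := by
    have := congrFun (congrArg WithLp.ofLp hgsum) ![0,0,1]
    simpa using this
  have q2 : g 0 * (1) + g 1 * (1) + g 2 * (0) = 0 := by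
    have := congrFun (congrArg WithLp.ofLp hgsum) ![0,1,0]
    simpa using this
  have hg0 : g 0 = 0 := by linear_combination ((-1 : ℂ)/2) * q1 + ((1 : ℂ)/2) * q2
  have hg1 : g 1 = 0 := by linear_combination ((1 : ℂ)/2) * q1 + ((1 : ℂ)/2) * q2
  have hg2 : g 2 = 0 := by linear_combination (1 : ℂ) * q0 + (1 : ℂ) * q2
  intro i; fin_cases i
  · exact hg0
  · exact hg1
  · exact hg2


lemma ortho_pair : ∀ (x : EuclideanSpace ℂ (Fin 3 → Fin 2)), x ∈ ({w1, w2} : Set _) →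
    ∀ y, y ∈ ({w3, w4, w5} : Set _) → inner ℂ x y = (0 : ℂ) := by
  intro x hx y hy
  simp only [Set.mem_insert_iff, Set.mem_singleton_iff] at hx hy
  rcases hx with rfl | rfl <;> rcases hy with rfl | rfl | rfl <;>
    rw [inner_expand] <;> norm_num

lemma ortho_pair' : ∀ (x : EuclideanSpace ℂ (Fin 3 → Fin 2)), x ∈ ({w1, w2} : Set _) →
    ∀ y, y ∈ ({w6, w7, w8} : Set _) → inner ℂ x y = (0 : ℂ) := by
  intro x hx y hy
  simp only [Set.mem_insert_iff, Set.mem_singleton_iff] at hx hy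
  rcases hx with rfl | rfl <;> rcases hy with rfl | rfl | rfl <;>
    rw [inner_expand] <;> norm_num

lemma ortho_pair'' : ∀ (x : EuclideanSpace ℂ (Fin 3 → Fin 2)), x ∈ ({w3, w4, w5} : Set _) →
    ∀ y, y ∈ ({w6, w7, w8} : Set _) → inner ℂ x y = (0 : ℂ) := by
  intro x hx y hy
  simp only [Set.mem_insert_iff, Set.mem_singleton_iff] at hx hy
  rcases hx with rfl | rfl | rfl <;> rcases hy with rfl | rfl | rfl <;>
    rw [inner_expand] <;> norm_num

lemma range2 : Set.range ![w1, w2] = ({w1, w2} : Set (EuclideanSpace ℂ (Fin 3 → Fin 2))) := by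
  ext x; simp [Matrix.range_cons, Matrix.range_empty]; tauto

lemma range3 : Set.range ![w3, w4, w5] = ({w3, w4, w5} : Set (EuclideanSpace ℂ (Fin 3 → Fin 2))) := by
  ext x; simp [Matrix.range_cons, Matrix.range_empty]; tauto

lemma range3' : Set.range ![w6, w7, w8] = ({w6, w7, w8} : Set (EuclideanSpace ℂ (Fin 3 → Fin 2))) := by
  ext x; simp [Matrix.range_cons, Matrix.range_empty]; tauto

end ThreeQubitGES

open ThreeQubitGES in
/-- The three-qubit Hilbert space decomposes into three mutually orthogonal
genuinely entangled subspaces of dimensions `2`, `3` and `3`. -/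
theorem three_qubit_GES_decomposition :
    ∃ G₁ G₂ G₃ : Submodule ℂ (EuclideanSpace ℂ (Fin 3 → Fin 2)),
      Submodule.IsOrtho G₁ G₂ ∧ Submodule.IsOrtho G₁ G₃ ∧ Submodule.IsOrtho G₂ G₃ ∧
      Module.finrank ℂ ↥G₁ = 2 ∧ Module.finrank ℂ ↥G₂ = 3 ∧
      Module.finrank ℂ ↥G₃ = 3 ∧
      (∀ ψ ∈ G₁, ψ ≠ 0 → GME ψ) ∧ (∀ ψ ∈ G₂, ψ ≠ 0 → GME ψ) ∧
      (∀ ψ ∈ G₃, ψ ≠ 0 → GME ψ) ∧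
      G₁ ⊔ G₂ ⊔ G₃ = ⊤ := by
  refine ⟨Submodule.span ℂ {w1, w2}, Submodule.span ℂ {w3, w4, w5},
    Submodule.span ℂ {w6, w7, w8}, ?_, ?_, ?_, ?_, ?_, ?_, gme1, gme2, gme3, ?_⟩
  · exact Submodule.isOrtho_span.mpr ortho_pair
  · exact Submodule.isOrtho_span.mpr ortho_pair'
  · exact Submodule.isOrtho_span.mpr ortho_pair''
  · rw [← range2, finrank_span_eq_card li1]; rfl
  · rw [← range3, finrank_span_eq_card li2]; rfl
  · rw [← range3', finrank_span_eq_card li3]; rfl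
  · have hO12 : Submodule.IsOrtho (Submodule.span ℂ {w1, w2})
        (Submodule.span ℂ {w3, w4, w5}) := Submodule.isOrtho_span.mpr ortho_pair
    have hO13 : Submodule.IsOrtho (Submodule.span ℂ {w1, w2})
        (Submodule.span ℂ {w6, w7, w8}) := Submodule.isOrtho_span.mpr ortho_pair'
    have hO23 : Submodule.IsOrtho (Submodule.span ℂ {w3, w4, w5})
        (Submodule.span ℂ {w6, w7, w8}) := Submodule.isOrtho_span.mpr ortho_pair''
    apply Submodule.eq_top_of_finrank_eq
    have h12 : Module.finrank ℂ
        ↥(Submodule.span ℂ {w1, w2} ⊔ Submodule.span ℂ {w3, w4, w5}) = 5 := by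
      have := Submodule.finrank_sup_add_finrank_inf_eq
        (Submodule.span ℂ ({w1, w2} : Set (EuclideanSpace ℂ (Fin 3 → Fin 2))))
        (Submodule.span ℂ {w3, w4, w5})
      rw [hO12.disjoint.eq_bot, finrank_bot, add_zero] at this
      rw [this, ← range2, finrank_span_eq_card li1, ← range3, finrank_span_eq_card li2]
      rfl
    have hO : Submodule.IsOrtho
        (Submodule.span ℂ {w1, w2} ⊔ Submodule.span ℂ {w3, w4, w5})
        (Submodule.span ℂ ({w6, w7, w8} : Set (EuclideanSpace ℂ (Fin 3 → Fin 2)))) :=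
      Submodule.isOrtho_sup_left.mpr ⟨hO13, hO23⟩
    have h123 := Submodule.finrank_sup_add_finrank_inf_eq
      (Submodule.span ℂ ({w1, w2} : Set (EuclideanSpace ℂ (Fin 3 → Fin 2)))
        ⊔ Submodule.span ℂ {w3, w4, w5})
      (Submodule.span ℂ {w6, w7, w8})
    rw [hO.disjoint.eq_bot, finrank_bot, add_zero] at h123
    rw [h123, h12, ← range3', finrank_span_eq_card li3, finrank_euclideanSpace]
    rfl
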